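/- For every positive integer n and every real λ with 0 < λ < n²π², the function G has derivative at λ equal to (1/4)·[ (sinh(2√(λ+n²π²)) − 2√(λ+n²π²)) / (√(λ+n²π²)·sinh²(√(λ+n²π²))) + (sinh(2√(n²π²−λ)) − 2√(n²π²−λ)) / (√(n²π²−λ)·sinh²(√(n²π²−λ))) ], and this derivative is strictly positive. -/

import Mathlib

open Real


lemma aux_deriv (x : ℝ) (hx : 0 < x) :
    HasDerivAt (fun y => Real.sqrt y / Real.tanh (Real.sqrt y))
      ((Real.sinh (2 * Real.sqrt x) - 2 * Real.sqrt x)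
        / (4 * Real.sqrt x * (Real.sinh (Real.sqrt x))^2)) x := by
  have hs : 0 < Real.sqrt x := Real.sqrt_pos.2 hx
  have hsh : Real.sinh (Real.sqrt x) ≠ 0 := ne_of_gt (Real.sinh_pos_iff.2 hs)
  have h1 : HasDerivAt Real.sqrt (1 / (2 * Real.sqrt x)) x := Real.hasDerivAt_sqrt hx.ne'
  have h2 : HasDerivAt (fun u => u * Real.cosh u / Real.sinh u)
      (((1 * Real.cosh (Real.sqrt x) + Real.sqrt x * Real.sinh (Real.sqrt x)) * Real.sinh (Real.sqrt x)
        - Real.sqrt x * Real.cosh (Real.sqrt x) * Real.cosh (Real.sqrt x)) / (Real.sinh (Real.sqrt x))^2)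
      (Real.sqrt x) :=
    ((hasDerivAt_id _).mul (Real.hasDerivAt_cosh _)).div (Real.hasDerivAt_sinh _) hsh
  have h3 := h2.comp x h1
  have hfun : (fun y => Real.sqrt y / Real.tanh (Real.sqrt y))
      = fun y => Real.sqrt y * Real.cosh (Real.sqrt y) / Real.sinh (Real.sqrt y) := by
    funext y
    rw [Real.tanh_eq_sinh_div_cosh, div_div_eq_mul_div]
  rw [hfun]
  refine h3.congr_deriv ?_
  have hc : Real.cosh (Real.sqrt x) ^ 2 = Real.sinh (Real.sqrt x) ^ 2 + 1 := Real.cosh_sq _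
  rw [Real.sinh_two_mul]
  field_simp
  linear_combination (-(4 * Real.sqrt x)) * hc

lemma aux_pos (x : ℝ) (hx : 0 < x) :
    0 < (Real.sinh (2 * Real.sqrt x) - 2 * Real.sqrt x)
        / (4 * Real.sqrt x * (Real.sinh (Real.sqrt x))^2) := by
  have hs : 0 < Real.sqrt x := Real.sqrt_pos.2 hx
  have hsh : 0 < Real.sinh (Real.sqrt x) := Real.sinh_pos_iff.2 hs
  have hnum : 0 < Real.sinh (2 * Real.sqrt x) - 2 * Real.sqrt x :=
    sub_pos.2 (Real.self_lt_sinh_iff.2 (by positivity))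
  positivity

/-- For every positive integer `n` and every real `λ` with `0 < λ < n²π²`,
the function `G(μ) = √(μ+n²π²)/tanh(√(μ+n²π²)) − √(n²π²−μ)/tanh(√(n²π²−μ))`
has derivative at `λ` equal to
`(1/4)·[(sinh(2√(λ+n²π²)) − 2√(λ+n²π²))/(√(λ+n²π²)·sinh²(√(λ+n²π²)))
      + (sinh(2√(n²π²−λ)) − 2√(n²π²−λ))/(√(n²π²−λ)·sinh²(√(n²π²−λ)))]`,
and this derivative is strictly positive. -/
theorem stmt_1 (n : ℕ) (hn : 0 < n) (lam : ℝ)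
    (hlam0 : 0 < lam) (hlam1 : lam < (n : ℝ)^2 * π^2) :
    HasDerivAt
      (fun l : ℝ =>
        Real.sqrt (l + (n : ℝ)^2 * π^2) / Real.tanh (Real.sqrt (l + (n : ℝ)^2 * π^2))
          - Real.sqrt ((n : ℝ)^2 * π^2 - l) / Real.tanh (Real.sqrt ((n : ℝ)^2 * π^2 - l)))
      ((1/4) *
        ((Real.sinh (2 * Real.sqrt (lam + (n : ℝ)^2 * π^2)) - 2 * Real.sqrt (lam + (n : ℝ)^2 * π^2))
            / (Real.sqrt (lam + (n : ℝ)^2 * π^2) * (Real.sinh (Real.sqrt (lam + (n : ℝ)^2 * π^2)))^2)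
          + (Real.sinh (2 * Real.sqrt ((n : ℝ)^2 * π^2 - lam)) - 2 * Real.sqrt ((n : ℝ)^2 * π^2 - lam))
            / (Real.sqrt ((n : ℝ)^2 * π^2 - lam) * (Real.sinh (Real.sqrt ((n : ℝ)^2 * π^2 - lam)))^2)))
      lam
    ∧ 0 < (1/4) *
        ((Real.sinh (2 * Real.sqrt (lam + (n : ℝ)^2 * π^2)) - 2 * Real.sqrt (lam + (n : ℝ)^2 * π^2))
            / (Real.sqrt (lam + (n : ℝ)^2 * π^2) * (Real.sinh (Real.sqrt (lam + (n : ℝ)^2 * π^2)))^2)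
          + (Real.sinh (2 * Real.sqrt ((n : ℝ)^2 * π^2 - lam)) - 2 * Real.sqrt ((n : ℝ)^2 * π^2 - lam))
            / (Real.sqrt ((n : ℝ)^2 * π^2 - lam) * (Real.sinh (Real.sqrt ((n : ℝ)^2 * π^2 - lam)))^2)) := by
  set c : ℝ := (n : ℝ)^2 * π^2 with hc
  have hx1 : 0 < lam + c := by positivity
  have hx2 : 0 < c - lam := sub_pos.2 hlam1
  have H1 := (aux_deriv (lam + c) hx1).comp lam ((hasDerivAt_id lam).add_const c)
  have H2 := (aux_deriv (c - lam) hx2).comp lam ((hasDerivAt_const lam c).sub (hasDerivAt_id lam))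
  have H := H1.sub H2
  constructor
  · refine H.congr_deriv ?_
    ring
  · have p1 := aux_pos (lam + c) hx1
    have p2 := aux_pos (c - lam) hx2
    have : (1/4 : ℝ) *
        ((Real.sinh (2 * Real.sqrt (lam + c)) - 2 * Real.sqrt (lam + c))
            / (Real.sqrt (lam + c) * (Real.sinh (Real.sqrt (lam + c)))^2)
          + (Real.sinh (2 * Real.sqrt (c - lam)) - 2 * Real.sqrt (c - lam))
            / (Real.sqrt (c - lam) * (Real.sinh (Real.sqrt (c - lam)))^2))
        = (Real.sinh (2 * Real.sqrt (lam + c)) - 2 * Real.sqrt (lam + c))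
            / (4 * Real.sqrt (lam + c) * (Real.sinh (Real.sqrt (lam + c)))^2)
          + (Real.sinh (2 * Real.sqrt (c - lam)) - 2 * Real.sqrt (c - lam))
            / (4 * Real.sqrt (c - lam) * (Real.sinh (Real.sqrt (c - lam)))^2) := by
      ring
    rw [this]
    exact add_pos p1 p2
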